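/- Let g : ℝ → ℝ be a nonzero function in H²(ℝ) and set a = (1/2)∫ g² dx, b = ∫ ((1/2)(g′)² − (1/6)g³) dx. Then a > 0 and b ≥ −μ a^{5/3} where μ = (36/5)(1/12)^{5/3}. Conversely, for any pair (a,b) with a > 0 and b ≥ −μ a^{5/3}, there exists a nonzero g ∈ H²(ℝ) with E₂(g) = a and E₃(g) = b. -/

import Mathlib

open MeasureTheory Set Filter Real intervalIntegral Topology

lemma amgm23 {x y : ℝ} (hx : 0 ≤ x) (hy : 0 ≤ y) : 5*x^2*y^3 ≤ 2*x^5 + 3*y^5 := by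
  have hc : 0 ≤ 2*x^3 + 4*x^2*y + 6*x*y^2 + 3*y^3 := by positivity
  nlinarith [mul_nonneg (sq_nonneg (x - y)) hc]

-- rpow facts about c := (a/12)^(2/3)
lemma c_facts {a : ℝ} (ha : 0 < a) :
    ∃ c : ℝ, 0 < c ∧ a = 12*(c*Real.sqrt c) ∧
      ((1:ℝ)/12)^((5:ℝ)/3) * a^((5:ℝ)/3) = c^2 * Real.sqrt c := by
  set y := a/12 with hy
  have hy0 : 0 < y := by positivity
  refine ⟨y ^ ((2:ℝ)/3), rpow_pos_of_pos hy0 _, ?_, ?_⟩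
  · have h1 : Real.sqrt (y ^ ((2:ℝ)/3)) = y ^ ((1:ℝ)/3) := by
      rw [Real.sqrt_eq_rpow, ← Real.rpow_mul hy0.le]
      norm_num
    rw [h1]
    have : y ^ ((2:ℝ)/3) * y ^ ((1:ℝ)/3) = y ^ ((2:ℝ)/3 + (1:ℝ)/3) := (Real.rpow_add hy0 _ _).symm
    rw [this]
    norm_num [Real.rpow_one]
    rw [hy]; ring
  · have h1 : Real.sqrt (y ^ ((2:ℝ)/3)) = y ^ ((1:ℝ)/3) := by
      rw [Real.sqrt_eq_rpow, ← Real.rpow_mul hy0.le]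
      norm_num
    have h2 : (y ^ ((2:ℝ)/3))^2 = y ^ ((4:ℝ)/3) := by
      rw [← Real.rpow_natCast (y ^ ((2:ℝ)/3)) 2, ← Real.rpow_mul hy0.le]
      norm_num
    rw [h1, h2, ← Real.rpow_add hy0]
    have h3 : ((1:ℝ)/12)^((5:ℝ)/3) * a^((5:ℝ)/3) = y ^ ((5:ℝ)/3) := by
      rw [← Real.mul_rpow (by norm_num) ha.le]
      congr 1
      rw [hy]; ring
    rw [h3]
    norm_num

lemma part1_algebra {M a : ℝ} (hM : 0 < M) (ha : 0 < a) :
    -(36/5) * ((1:ℝ)/12) ^ ((5:ℝ)/3) * a ^ ((5:ℝ)/3)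
      ≤ 2 * ((Real.sqrt 3)⁻¹ * ((4/15) * (M^2 * Real.sqrt M))) - M/3 * a := by
  obtain ⟨c, hc, hac, hk⟩ := c_facts ha
  set m := Real.sqrt M with hm
  set sc := Real.sqrt c with hsc
  set t3 := Real.sqrt 3 with ht3def
  have hm0 : 0 < m := Real.sqrt_pos.mpr hM
  have hsc0 : 0 < sc := Real.sqrt_pos.mpr hc
  have hM2 : M = m^2 := (Real.sq_sqrt hM.le).symm
  have ht3 : t3^2 = 3 := Real.sq_sqrt (by norm_num)
  have ht3p : 0 < t3 := Real.sqrt_pos.mpr (by norm_num)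
  have ht3i : t3⁻¹ = t3/3 := by
    field_simp
    nlinarith [ht3]
  have hamgm := amgm23 hm0.le (mul_nonneg ht3p.le hsc0.le)
  have h36 : -(36/5) * ((1:ℝ)/12) ^ ((5:ℝ)/3) * a ^ ((5:ℝ)/3) = -(36/5)*(c^2*sc) := by
    rw [mul_assoc, hk]
  rw [h36, hac, hM2, ht3i]
  have hcsq : c = sc^2 := (Real.sq_sqrt hc.le).symm
  rw [hcsq]
  have e1 : (t3*sc)^3 = 3*(t3*sc^3) := by
    rw [show (t3*sc)^3 = t3^2*(t3*sc^3) from by ring, ht3]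
  have e2 : (t3*sc)^5 = 9*(t3*sc^5) := by
    rw [show (t3*sc)^5 = t3^2*(t3^2*(t3*sc^5)) from by ring, ht3]; ring
  rw [e1, e2] at hamgm
  have h3 := mul_le_mul_of_nonneg_left hamgm ht3p.le
  have e5 : t3*(t3*sc^5) = 3*sc^5 := by
    rw [show t3*(t3*sc^5) = t3^2*sc^5 from by ring, ht3]
  have e6 : t3*(t3*sc^3)*m^2 = 3*(m^2*sc^3) := by
    rw [show t3*(t3*sc^3)*m^2 = t3^2*(m^2*sc^3) from by ring, ht3]
  nlinarith [h3, e5, e6]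

lemma sqrt_int {M : ℝ} (hM : 0 < M) :
    ∫ t in (0:ℝ)..M, t * Real.sqrt (M - t) = (4/15) * (M^2 * Real.sqrt M) := by
  set G : ℝ → ℝ := fun t => (2/5)*((M-t)^2*Real.sqrt (M-t)) - (2/3)*(M*((M-t)*Real.sqrt (M-t)))
    with hG
  have hcG : Continuous G := by
    apply Continuous.sub <;> fun_prop
  have hderiv : ∀ t ∈ Ioo 0 M, HasDerivAt G (t * Real.sqrt (M - t)) t := by
    intro t ht
    have hst : (0:ℝ) < M - t := by linarith [ht.2]
    have hs : HasDerivAt (fun x : ℝ => M - x) (-1) t := (hasDerivAt_id t).const_sub M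
    have hsq : HasDerivAt (fun x : ℝ => Real.sqrt (M - x)) (1/(2*Real.sqrt (M-t)) * (-1)) t :=
      (Real.hasDerivAt_sqrt (ne_of_gt hst)).comp t hs
    have h1 : HasDerivAt (fun x : ℝ => (M-x)^2*Real.sqrt (M-x))
        ((2*(M-t)*(-1))*Real.sqrt (M-t) + (M-t)^2*(1/(2*Real.sqrt (M-t)) * (-1))) t := by
      exact ((hs.pow 2).mul hsq).congr_deriv (by simp only [Pi.pow_apply]; ring)
    have h2 : HasDerivAt (fun x : ℝ => M*((M-x)*Real.sqrt (M-x)))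
        (M*((-1)*Real.sqrt (M-t) + (M-t)*(1/(2*Real.sqrt (M-t)) * (-1)))) t :=
      (hs.mul hsq).const_mul M
    have := (h1.const_mul (2/5:ℝ)).sub (h2.const_mul (2/3:ℝ))
    apply this.congr_deriv
    set r := Real.sqrt (M-t) with hrdef
    have hr : r^2 = M - t := Real.sq_sqrt hst.le
    have hrne : r ≠ 0 := by positivity
    rw [← hr]
    field_simp
    linear_combination (-15) * hr
  have hint : IntervalIntegrable (fun t : ℝ => t * Real.sqrt (M-t)) volume 0 M := by
    apply Continuous.intervalIntegrable; fun_prop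
  rw [intervalIntegral.integral_eq_sub_of_hasDerivAt_of_le hM.le hcG.continuousOn hderiv hint]
  have : G M = 0 := by simp [hG]
  rw [this, hG]
  simp only [sub_zero]
  ring

lemma Phi_value {M : ℝ} (hM : 0 < M) :
    ∫ t in (0:ℝ)..M, Real.sqrt ((M*t^2 - t^3)/3)
      = (Real.sqrt 3)⁻¹ * ((4/15) * (M^2 * Real.sqrt M)) := by
  have hcong : EqOn (fun t => Real.sqrt ((M*t^2 - t^3)/3))
      (fun t => (Real.sqrt 3)⁻¹ * (t * Real.sqrt (M - t))) (uIcc (0:ℝ) M) := by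
    intro t ht
    rw [uIcc_of_le hM.le] at ht
    simp only
    rw [show (M*t^2 - t^3)/3 = t^2*((M-t)*3⁻¹) by ring,
       Real.sqrt_mul (sq_nonneg t), Real.sqrt_sq ht.1,
       Real.sqrt_mul (by linarith [ht.2]), Real.sqrt_inv]
    ring
  rw [intervalIntegral.integral_congr hcong, intervalIntegral.integral_const_mul, sqrt_int hM]

lemma part1 (g g' g'' : ℝ → ℝ)
    (hd : ∀ x, HasDerivAt g (g' x) x) (hd' : ∀ x, HasDerivAt g' (g'' x) x)
    (h2 : MemLp g 2 (volume : Measure ℝ)) (h2' : MemLp g' 2 (volume : Measure ℝ))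
    (hne : g ≠ 0) :
    0 < (1 / 2) * (∫ x : ℝ, (g x) ^ 2) ∧
      -(36 / 5) * ((1 : ℝ) / 12) ^ ((5 : ℝ) / 3)
          * ((1 / 2) * (∫ x : ℝ, (g x) ^ 2)) ^ ((5 : ℝ) / 3) ≤
        ∫ x : ℝ, ((1 / 2) * (g' x) ^ 2 - (1 / 6) * (g x) ^ 3) := by
  have gcont : Continuous g := continuous_iff_continuousAt.mpr fun x => (hd x).continuousAt
  have g'cont : Continuous g' := continuous_iff_continuousAt.mpr fun x => (hd' x).continuousAt
  have hg2int : Integrable (fun x => (g x)^2) := h2.integrable_sq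
  have hg'2int : Integrable (fun x => (g' x)^2) := h2'.integrable_sq
  -- derivative of g^2 and decay
  have hgg' : Integrable (fun x => 2*(g x)*(g' x)) := by
    apply Integrable.mono' (hg2int.add hg'2int)
      (((continuous_const.mul gcont).mul g'cont).aestronglyMeasurable)
    filter_upwards with x
    simp only [Pi.add_apply, Pi.mul_apply]
    rw [Real.norm_eq_abs, abs_le]
    constructor <;> nlinarith [sq_nonneg (g x + g' x), sq_nonneg (g x - g' x)]
  have hsq_deriv : ∀ x, HasDerivAt (fun y => (g y)^2) (2*(g x)*(g' x)) x := by
    intro x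
    simpa [Pi.pow_def] using ((hd x).pow 2)
  have htop2 : Tendsto (fun x => (g x)^2) atTop (𝓝 0) :=
    tendsto_zero_of_hasDerivAt_of_integrableOn_Ioi (a := 0) (fun x _ => hsq_deriv x)
      hgg'.integrableOn hg2int.integrableOn
  have hbot2 : Tendsto (fun x => (g x)^2) atBot (𝓝 0) :=
    tendsto_zero_of_hasDerivAt_of_integrableOn_Iic (a := 0) (fun x _ => hsq_deriv x)
      hgg'.integrableOn hg2int.integrableOn
  have habsbd : ∀ x, ‖g x‖ ≤ Real.sqrt ((g x)^2) := fun x => by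
    rw [Real.sqrt_sq_eq_abs, Real.norm_eq_abs]
  have gtop : Tendsto g atTop (𝓝 0) :=
    squeeze_zero_norm habsbd (by simpa [Function.comp_def] using (Real.continuous_sqrt.tendsto 0).comp htop2)
  have gbot : Tendsto g atBot (𝓝 0) :=
    squeeze_zero_norm habsbd (by simpa [Function.comp_def] using (Real.continuous_sqrt.tendsto 0).comp hbot2)
  have gcc : Tendsto g (cocompact ℝ) (𝓝 0) := by
    rw [cocompact_eq_atBot_atTop]
    exact tendsto_sup.mpr ⟨gbot, gtop⟩
  -- positivity of the mass
  have hx1 : ∃ x1, g x1 ≠ 0 := by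
    by_contra h
    push_neg at h
    exact hne (funext fun x => h x)
  obtain ⟨x1, hx1⟩ := hx1
  have hIg2pos : 0 < ∫ x, (g x)^2 := by
    rw [integral_pos_iff_support_of_nonneg_ae (Eventually.of_forall fun x => sq_nonneg _) hg2int]
    have hsupp : Function.support (fun x => (g x)^2) = {x | g x ≠ 0} := by
      ext x
      simp [Function.support, pow_eq_zero_iff]
    rw [hsupp]
    apply IsOpen.measure_pos
    · exact isOpen_compl_singleton.preimage gcont
    · exact ⟨x1, hx1⟩
  have ha : 0 < (1/2) * ∫ x, (g x)^2 := by linarith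
  refine ⟨ha, ?_⟩
  by_cases hp : ∃ x, 0 < g x
  swap
  · -- g ≤ 0 everywhere
    push_neg at hp
    have h0 : (0:ℝ) ≤ ∫ x, ((1/2)*(g' x)^2 - (1/6)*(g x)^3) := by
      apply MeasureTheory.integral_nonneg
      intro x
      have h3 : g x * (g x)^2 ≤ 0 := mul_nonpos_of_nonpos_of_nonneg (hp x) (sq_nonneg _)
      simp only [Pi.zero_apply]
      nlinarith [sq_nonneg (g' x)]
    have hR : -(36/5) * ((1:ℝ)/12)^((5:ℝ)/3) * ((1/2) * ∫ x, (g x)^2)^((5:ℝ)/3) ≤ 0 := by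
      have h1 : (0:ℝ) ≤ ((1:ℝ)/12)^((5:ℝ)/3) := Real.rpow_nonneg (by norm_num) _
      have h2 : (0:ℝ) ≤ ((1/2) * ∫ x, (g x)^2)^((5:ℝ)/3) := Real.rpow_nonneg ha.le _
      nlinarith
    linarith
  obtain ⟨x2, hx2⟩ := hp
  -- the max of g
  obtain ⟨x₀, hx₀⟩ := gcont.exists_forall_ge' x2 (gcc.eventually (eventually_le_nhds hx2))
  set M := g x₀ with hMdef
  have hM : 0 < M := lt_of_lt_of_le hx2 (hx₀ x2)
  -- a uniform bound on |g|
  have gccabs : Tendsto (fun x => |g x|) (cocompact ℝ) (𝓝 0) := by simpa using gcc.abs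
  obtain ⟨xc, hxc⟩ := gcont.abs.exists_forall_ge' x2
    (gccabs.eventually (eventually_le_nhds (abs_pos.mpr (ne_of_gt hx2))))
  set C := |g xc| with hCdef
  have hg3int : Integrable (fun x => (g x)^3) := by
    apply Integrable.mono' (hg2int.const_mul C) ((gcont.pow 3).aestronglyMeasurable)
    filter_upwards with x
    rw [Real.norm_eq_abs, Pi.pow_apply, abs_pow]
    nlinarith [hxc x, sq_abs (g x), abs_nonneg (g x)]
  -- Φ and u
  set φ : ℝ → ℝ := fun s => Real.sqrt ((M*s^2 - s^3)/3) with hφdef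
  have hφc : Continuous φ := by
    apply Real.continuous_sqrt.comp
    fun_prop
  set Φ : ℝ → ℝ := fun s => ∫ t in (0:ℝ)..s, φ t with hΦdef
  have hΦd : ∀ s, HasDerivAt Φ (φ s) s := fun s => (hφc.integral_hasStrictDerivAt 0 s).hasDerivAt
  set u' : ℝ → ℝ := fun x => φ (g x) * g' x with hu'def
  have hud : ∀ x, HasDerivAt (fun y => Φ (g y)) (u' x) x := fun x => (hΦd (g x)).comp x (hd x)
  have hWpos : ∀ s, s ≤ M → 0 ≤ (M*s^2 - s^3)/3 := fun s hs => by nlinarith [sq_nonneg s]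
  set F : ℝ → ℝ := fun x => (1/2)*(g' x)^2 + ((M/6)*(g x)^2 - (1/6)*(g x)^3) with hFdef
  have hkey : ∀ x, |u' x| ≤ F x := by
    intro x
    have h1 : φ (g x)^2 = (M*(g x)^2 - (g x)^3)/3 := Real.sq_sqrt (hWpos _ (hx₀ x))
    have h2 : 0 ≤ φ (g x) := Real.sqrt_nonneg _
    simp only [hu'def, hFdef]
    rw [abs_mul, abs_of_nonneg h2]
    nlinarith [sq_nonneg (φ (g x) - |g' x|), sq_abs (g' x), abs_nonneg (g' x)]
  have hFint : Integrable F :=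
    (hg'2int.const_mul (1/2)).add ((hg2int.const_mul (M/6)).sub (hg3int.const_mul (1/6)))
  have hu'int : Integrable u' := by
    apply Integrable.mono' hFint ((hφc.comp gcont).mul g'cont).aestronglyMeasurable
    filter_upwards with x
    rw [Real.norm_eq_abs]
    exact hkey x
  have hΦ0 : Φ 0 = 0 := intervalIntegral.integral_same
  have hΦc : Continuous Φ := continuous_iff_continuousAt.mpr fun s => (hΦd s).continuousAt
  have hutop : Tendsto (fun x => Φ (g x)) atTop (𝓝 0) := by
    have := (hΦc.tendsto 0).comp gtop
    rwa [hΦ0] at this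
  have hubot : Tendsto (fun x => Φ (g x)) atBot (𝓝 0) := by
    have := (hΦc.tendsto 0).comp gbot
    rwa [hΦ0] at this
  have hIic : ∫ x in Iic x₀, u' x = Φ M - 0 :=
    integral_Iic_of_hasDerivAt_of_tendsto' (fun x _ => hud x) hu'int.integrableOn hubot
  have hIoi : ∫ x in Ioi x₀, u' x = 0 - Φ M :=
    integral_Ioi_of_hasDerivAt_of_tendsto' (fun x _ => hud x) hu'int.integrableOn hutop
  have hΦM0 : 0 ≤ Φ M :=
    intervalIntegral.integral_nonneg (a := (0:ℝ)) (b := M) hM.le fun t _ => Real.sqrt_nonneg _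
  have habs : Integrable (fun x => |u' x|) := hu'int.abs
  have hsplit : ∫ x, |u' x| = (∫ x in Iic x₀, |u' x|) + ∫ x in Ioi x₀, |u' x| := by
    rw [← setIntegral_univ, ← Set.Iic_union_Ioi (a := x₀),
      setIntegral_union (Iic_disjoint_Ioi le_rfl) measurableSet_Ioi habs.integrableOn
        habs.integrableOn]
  have hb1 : Φ M ≤ ∫ x in Iic x₀, |u' x| := by
    have h := norm_integral_le_integral_norm (μ := volume.restrict (Iic x₀)) u'
    rw [hIic] at h
    simp only [Real.norm_eq_abs] at h
    rw [sub_zero, abs_of_nonneg hΦM0] at h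
    exact h
  have hb2 : Φ M ≤ ∫ x in Ioi x₀, |u' x| := by
    have h := norm_integral_le_integral_norm (μ := volume.restrict (Ioi x₀)) u'
    rw [hIoi] at h
    simp only [Real.norm_eq_abs] at h
    rw [zero_sub, abs_neg, abs_of_nonneg hΦM0] at h
    exact h
  have hFge : 2 * Φ M ≤ ∫ x, F x := by
    have hmono : ∫ x, |u' x| ≤ ∫ x, F x := integral_mono habs hFint hkey
    linarith
  have hFval : ∫ x, F x = (1/2)*(∫ x, (g' x)^2)
      + ((M/6)*(∫ x, (g x)^2) - (1/6)*(∫ x, (g x)^3)) := by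
    have e1 : Integrable (fun x => (M/6)*(g x)^2 - (1/6)*(g x)^3) volume := by
      exact (hg2int.const_mul _).sub (hg3int.const_mul _)
    have e2 : Integrable (fun x => (1/2)*(g' x)^2) volume := hg'2int.const_mul _
    rw [MeasureTheory.integral_add e2 e1,
      MeasureTheory.integral_sub (hg2int.const_mul _) (hg3int.const_mul _),
      MeasureTheory.integral_const_mul, MeasureTheory.integral_const_mul, MeasureTheory.integral_const_mul]
  have hEval : ∫ x, ((1/2)*(g' x)^2 - (1/6)*(g x)^3)
      = (1/2)*(∫ x, (g' x)^2) - (1/6)*(∫ x, (g x)^3) := by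
    have e2 : Integrable (fun x => (1/2)*(g' x)^2) volume := hg'2int.const_mul _
    rw [MeasureTheory.integral_sub e2 (hg3int.const_mul _),
      MeasureTheory.integral_const_mul, MeasureTheory.integral_const_mul]
  have hΦMval : Φ M = (Real.sqrt 3)⁻¹ * ((4/15) * (M^2 * Real.sqrt M)) := Phi_value hM
  have halg := part1_algebra hM ha
  rw [hEval]
  linarith [hFge, hFval, hΦMval, halg]

noncomputable def Th (y : ℝ) : ℝ := Real.sinh y / Real.cosh y

lemma Th_hasDeriv (y : ℝ) : HasDerivAt Th (((Real.cosh y)^2)⁻¹) y := by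
  have h := (Real.hasDerivAt_sinh y).div (Real.hasDerivAt_cosh y) (ne_of_gt (Real.cosh_pos y))
  apply h.congr_deriv
  have hc := Real.cosh_sq_sub_sinh_sq y
  field_simp
  linarith [hc]

lemma Th_tendsto_top : Tendsto Th atTop (𝓝 1) := by
  have heq : ∀ y : ℝ, Th y = (1 - Real.exp (-2*y)) / (1 + Real.exp (-2*y)) := by
    intro y
    have h2 : Real.exp (-2*y) = Real.exp (-y) * Real.exp (-y) := by
      rw [← Real.exp_add]; ring_nf
    have h3 : Real.exp y * Real.exp (-y) = 1 := by rw [← Real.exp_add]; simp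
    rw [Th, Real.sinh_eq, Real.cosh_eq, h2]
    have hd : Real.exp y + Real.exp (-y) ≠ 0 := by positivity
    have hd2 : 1 + Real.exp (-y) * Real.exp (-y) ≠ 0 := by positivity
    field_simp
    linear_combination (2*Real.exp (-y)) * h3
  have h2y : Tendsto (fun y : ℝ => 2*y) atTop atTop := tendsto_id.const_mul_atTop two_pos
  have hexp : Tendsto (fun y : ℝ => Real.exp (-2*y)) atTop (𝓝 0) := by
    refine (Real.tendsto_exp_neg_atTop_nhds_zero.comp h2y).congr fun y => ?_
    simp [Function.comp_def, neg_mul]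
  have hq : Tendsto (fun y : ℝ => (1 - Real.exp (-2*y)) / (1 + Real.exp (-2*y))) atTop (𝓝 1) := by
    have h1 : Tendsto (fun y : ℝ => 1 - Real.exp (-2*y)) atTop (𝓝 (1 - 0)) :=
      tendsto_const_nhds.sub hexp
    have h2' : Tendsto (fun y : ℝ => 1 + Real.exp (-2*y)) atTop (𝓝 (1 + 0)) :=
      tendsto_const_nhds.add hexp
    have := h1.div h2' (by norm_num)
    simpa [Pi.div_def] using this
  exact hq.congr (fun y => (heq y).symm)

lemma Th_tendsto_bot : Tendsto Th atBot (𝓝 (-1)) := by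
  have hodd : ∀ y : ℝ, Th y = -(Th (-y)) := by
    intro y
    simp [Th, Real.sinh_neg, Real.cosh_neg, neg_div]
  have := (Th_tendsto_top.comp tendsto_neg_atBot_atTop).neg
  simp only [Function.comp] at this
  exact this.congr fun y => (hodd y).symm

lemma even_integrable {f : ℝ → ℝ} (he : ∀ x, f (-x) = f x)
    (hf : IntegrableOn f (Ioi 0)) : Integrable f := by
  have hIic : IntegrableOn f (Iic 0) := by
    rw [← Measure.map_neg_eq_self (volume : Measure ℝ)]
    have m : MeasurableEmbedding fun x : ℝ => -x := (Homeomorph.neg ℝ).measurableEmbedding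
    rw [m.integrableOn_map_iff]
    simp_rw [Function.comp_def, he, neg_preimage, neg_Iic, neg_zero]
    exact (integrableOn_Ici_iff_integrableOn_Ioi' (by simp)).mpr hf
  rw [← integrableOn_univ, ← Set.Iic_union_Ioi (a := (0:ℝ))]
  exact hIic.union hf

lemma tanh_antideriv {β : ℝ} (hβ : 0 < β) {f : ℝ → ℝ} {P p : ℝ → ℝ}
    (hP : ∀ y, HasDerivAt P (p y) y) (hPc : Continuous P)
    (hf : ∀ x, (1/β) * (p (Th (β*x)) * (((Real.cosh (β*x))^2)⁻¹ * β)) = f x)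
    (hpos : ∀ x, 0 ≤ f x) (he : ∀ x, f (-x) = f x) :
    Integrable f ∧ ∫ x, f x = (P 1 - P (-1))/β := by
  set A : ℝ → ℝ := fun x => (1/β) * P (Th (β*x)) with hA
  have hβx : ∀ x : ℝ, HasDerivAt (fun x : ℝ => β*x) β x := by
    intro x
    simpa using (hasDerivAt_id x).const_mul β
  have hAd : ∀ x, HasDerivAt A (f x) x := by
    intro x
    have h1 : HasDerivAt (fun x : ℝ => Th (β*x)) (((Real.cosh (β*x))^2)⁻¹ * β) x :=
      (Th_hasDeriv (β*x)).comp x (hβx x)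
    have h2 : HasDerivAt (fun x : ℝ => P (Th (β*x)))
        (p (Th (β*x)) * (((Real.cosh (β*x))^2)⁻¹ * β)) x :=
      (hP (Th (β*x))).comp x h1
    exact (h2.const_mul (1/β)).congr_deriv (hf x)
  have hβtop : Tendsto (fun x : ℝ => β*x) atTop atTop := tendsto_id.const_mul_atTop hβ
  have hβbot : Tendsto (fun x : ℝ => β*x) atBot atBot := tendsto_id.const_mul_atBot hβ
  have hAtop : Tendsto A atTop (𝓝 ((1/β) * P 1)) :=
    (((hPc.tendsto 1).comp (Th_tendsto_top.comp hβtop))).const_mul (1/β)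
  have hAbot : Tendsto A atBot (𝓝 ((1/β) * P (-1))) :=
    (((hPc.tendsto (-1)).comp (Th_tendsto_bot.comp hβbot))).const_mul (1/β)
  have hint : Integrable f := even_integrable he
    (integrableOn_Ioi_deriv_of_nonneg' (fun x _ => hAd x) (fun x _ => hpos x) hAtop)
  refine ⟨hint, ?_⟩
  rw [integral_of_hasDerivAt_of_tendsto hAd hint hAbot hAtop]
  ring

lemma cosh_int {β : ℝ} (hβ : 0 < β) :
    (Integrable (fun x => ((Real.cosh (β*x))^2)⁻¹^2)
      ∧ ∫ x : ℝ, ((Real.cosh (β*x))^2)⁻¹^2 = 4/(3*β)) ∧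
    (Integrable (fun x => (Real.sinh (β*x))^2 * ((Real.cosh (β*x))^2)⁻¹^3)
      ∧ ∫ x : ℝ, (Real.sinh (β*x))^2 * ((Real.cosh (β*x))^2)⁻¹^3 = 4/(15*β)) ∧
    (Integrable (fun x => ((Real.cosh (β*x))^2)⁻¹^3)
      ∧ ∫ x : ℝ, ((Real.cosh (β*x))^2)⁻¹^3 = 16/(15*β)) := by
  have hβ' : β ≠ 0 := ne_of_gt hβ
  have key : ∀ x : ℝ, Real.cosh (β*x) ≠ 0 := fun x => ne_of_gt (Real.cosh_pos _)
  have hid : ∀ y : ℝ, (Real.cosh y)^2 - (Real.sinh y)^2 = 1 := Real.cosh_sq_sub_sinh_sq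
  have hs2 : ∀ x : ℝ, (Real.sinh (β*x))^2 = (Real.cosh (β*x))^2 - 1 := fun x => by
    linarith [hid (β*x)]
  -- case 1
  have hP1 : ∀ y : ℝ, HasDerivAt (fun y : ℝ => y - y^3/3) (1 - y^2) y := by
    intro y
    have := (hasDerivAt_id y).sub (((hasDerivAt_id y).pow 3).div_const 3)
    apply this.congr_deriv
    simp only [id_eq]
    push_cast
    ring
  have hPc1 : Continuous (fun y : ℝ => y - y^3/3) := by fun_prop
  have hf1 : ∀ x : ℝ, (1/β) * ((1 - (Th (β*x))^2) * (((Real.cosh (β*x))^2)⁻¹ * β))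
      = ((Real.cosh (β*x))^2)⁻¹^2 := by
    intro x
    rw [Th, div_pow, hs2 x]
    field_simp
    ring
  have hpos1 : ∀ x : ℝ, (0:ℝ) ≤ ((Real.cosh (β*x))^2)⁻¹^2 := fun x => by positivity
  have he1 : ∀ x : ℝ, ((Real.cosh (β*(-x)))^2)⁻¹^2 = ((Real.cosh (β*x))^2)⁻¹^2 := fun x => by
    rw [show β * -x = -(β*x) by ring, Real.cosh_neg]
  obtain ⟨int1, val1⟩ := tanh_antideriv hβ hP1 hPc1 hf1 hpos1 he1
  -- case 2
  have hP2 : ∀ y : ℝ, HasDerivAt (fun y : ℝ => y^3/3 - y^5/5) (y^2 - y^4) y := by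
    intro y
    have := (((hasDerivAt_id y).pow 3).div_const 3).sub (((hasDerivAt_id y).pow 5).div_const 5)
    apply this.congr_deriv
    simp only [id_eq]
    push_cast
    ring
  have hPc2 : Continuous (fun y : ℝ => y^3/3 - y^5/5) := by fun_prop
  have hf2 : ∀ x : ℝ, (1/β) * (((Th (β*x))^2 - (Th (β*x))^4) * (((Real.cosh (β*x))^2)⁻¹ * β))
      = (Real.sinh (β*x))^2 * ((Real.cosh (β*x))^2)⁻¹^3 := by
    intro x
    rw [Th, div_pow, div_pow, show (Real.sinh (β*x))^4 = ((Real.cosh (β*x))^2 - 1)^2 by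
      rw [show (Real.sinh (β*x))^4 = ((Real.sinh (β*x))^2)^2 by ring, hs2 x], hs2 x]
    field_simp
    ring
  have hpos2 : ∀ x : ℝ, (0:ℝ) ≤ (Real.sinh (β*x))^2 * ((Real.cosh (β*x))^2)⁻¹^3 := fun x => by
    positivity
  have he2 : ∀ x : ℝ, (Real.sinh (β*(-x)))^2 * ((Real.cosh (β*(-x)))^2)⁻¹^3
      = (Real.sinh (β*x))^2 * ((Real.cosh (β*x))^2)⁻¹^3 := fun x => by
    rw [show β * -x = -(β*x) by ring, Real.cosh_neg, Real.sinh_neg, neg_sq]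
  obtain ⟨int2, val2⟩ := tanh_antideriv hβ hP2 hPc2 hf2 hpos2 he2
  -- case 3
  have hP3 : ∀ y : ℝ, HasDerivAt (fun y : ℝ => y - (2/3)*y^3 + y^5/5) (1 - 2*y^2 + y^4) y := by
    intro y
    have := ((hasDerivAt_id y).sub (((hasDerivAt_id y).pow 3).const_mul (2/3:ℝ))).add
      (((hasDerivAt_id y).pow 5).div_const 5)
    apply this.congr_deriv
    simp only [id_eq]
    push_cast
    ring
  have hPc3 : Continuous (fun y : ℝ => y - (2/3)*y^3 + y^5/5) := by fun_prop
  have hf3 : ∀ x : ℝ, (1/β) * ((1 - 2*(Th (β*x))^2 + (Th (β*x))^4) * (((Real.cosh (β*x))^2)⁻¹ * β))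
      = ((Real.cosh (β*x))^2)⁻¹^3 := by
    intro x
    rw [Th, div_pow, div_pow, show (Real.sinh (β*x))^4 = ((Real.cosh (β*x))^2 - 1)^2 by
      rw [show (Real.sinh (β*x))^4 = ((Real.sinh (β*x))^2)^2 by ring, hs2 x], hs2 x]
    field_simp
    ring
  have hpos3 : ∀ x : ℝ, (0:ℝ) ≤ ((Real.cosh (β*x))^2)⁻¹^3 := fun x => by positivity
  have he3 : ∀ x : ℝ, ((Real.cosh (β*(-x)))^2)⁻¹^3 = ((Real.cosh (β*x))^2)⁻¹^3 := fun x => by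
    rw [show β * -x = -(β*x) by ring, Real.cosh_neg]
  obtain ⟨int3, val3⟩ := tanh_antideriv hβ hP3 hPc3 hf3 hpos3 he3
  refine ⟨⟨int1, ?_⟩, ⟨int2, ?_⟩, ⟨int3, ?_⟩⟩
  · rw [val1]; norm_num; ring
  · rw [val2]; norm_num; ring
  · rw [val3]; norm_num; ring

set_option maxHeartbeats 2000000 in
lemma part2 (a b : ℝ) (ha : 0 < a)
    (hb : -(36 / 5) * ((1 : ℝ) / 12) ^ ((5 : ℝ) / 3) * a ^ ((5 : ℝ) / 3) ≤ b) :
    ∃ g g' g'' : ℝ → ℝ,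
      (∀ x, HasDerivAt g (g' x) x) ∧ (∀ x, HasDerivAt g' (g'' x) x) ∧
      MemLp g 2 (volume : Measure ℝ) ∧ MemLp g' 2 (volume : Measure ℝ) ∧
      MemLp g'' 2 (volume : Measure ℝ) ∧ g ≠ 0 ∧
      (1 / 2) * (∫ x : ℝ, (g x) ^ 2) = a ∧
      (∫ x : ℝ, ((1 / 2) * (g' x) ^ 2 - (1 / 6) * (g x) ^ 3)) = b := by
  obtain ⟨c, hc, hac, hk⟩ := c_facts ha
  have hscpos : 0 < Real.sqrt c := Real.sqrt_pos.mpr hc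
  set fE : ℝ → ℝ := fun β => (4/5)*a*β^2 - (4*a/15)*Real.sqrt (3*a*β/2) with hfE
  have hfEc : Continuous fE := by
    apply Continuous.sub
    · exact (continuous_const.mul continuous_const).mul (continuous_pow 2)
    · exact continuous_const.mul (Real.continuous_sqrt.comp (by fun_prop))
  set β₀ : ℝ := Real.sqrt c / 2 with hβ₀
  have hβ₀p : 0 < β₀ := by positivity
  have hsqβ₀ : β₀^2 = c/4 := by
    rw [hβ₀, div_pow, Real.sq_sqrt hc.le]
    norm_num
  have h9 : 3*a*β₀/2 = 9*c^2 := by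
    rw [hac, hβ₀]
    have hss : Real.sqrt c ^ 2 = c := Real.sq_sqrt hc.le
    field_simp
    linear_combination 36 * hss
  have hfEβ₀ : fE β₀ = -(36/5)*(c^2*Real.sqrt c) := by
    show (4/5)*a*β₀^2 - (4*a/15)*Real.sqrt (3*a*β₀/2) = _
    rw [h9, show (9:ℝ)*c^2 = (3*c)^2 by ring, Real.sqrt_sq (by positivity : (0:ℝ) ≤ 3*c),
      hsqβ₀, hac]
    ring
  set C := (4*a/15)*Real.sqrt (3*a/2) with hC
  have hCpos : 0 ≤ C := by positivity
  set T := max β₀ (max 1 ((|b| + C + 1) * (5/(4*a)) + 1)) with hT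
  have hT1 : (1:ℝ) ≤ T := le_trans (le_max_left 1 _) (le_max_right β₀ _)
  have hTβ₀ : β₀ ≤ T := le_max_left _ _
  have hT2 : (|b| + C + 1) * (5/(4*a)) + 1 ≤ T :=
    le_trans (le_max_right 1 _) (le_max_right β₀ _)
  have hT0 : 0 < T := lt_of_lt_of_le one_pos hT1
  have hsplitT : Real.sqrt (3*a*T/2) = Real.sqrt (3*a/2) * Real.sqrt T := by
    rw [← Real.sqrt_mul (by positivity)]
    ring_nf
  have hsqT : Real.sqrt T ≤ T := by
    nlinarith [sq_nonneg (Real.sqrt T - 1), Real.sq_sqrt hT0.le, hT1]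
  have hfET : b ≤ fE T := by
    show b ≤ (4/5)*a*T^2 - (4*a/15)*Real.sqrt (3*a*T/2)
    rw [hsplitT]
    have h1 : (4*a/15)*(Real.sqrt (3*a/2) * Real.sqrt T) ≤ C * T := by
      have h := mul_le_mul_of_nonneg_left hsqT
        (by positivity : (0:ℝ) ≤ (4*a/15)*Real.sqrt (3*a/2))
      calc (4*a/15)*(Real.sqrt (3*a/2) * Real.sqrt T)
          = ((4*a/15)*Real.sqrt (3*a/2)) * Real.sqrt T := by ring
        _ ≤ ((4*a/15)*Real.sqrt (3*a/2)) * T := h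
        _ = C * T := by rw [hC]
    have h2 : |b| + C + 1 ≤ (4/5)*a*T := by
      have h3 : (4/5)*a*((|b| + C + 1) * (5/(4*a)) + 1) ≤ (4/5)*a*T :=
        mul_le_mul_of_nonneg_left hT2 (by positivity)
      have h4 : (4/5)*a*((|b| + C + 1) * (5/(4*a))) = |b| + C + 1 := by
        field_simp
      nlinarith [ha, abs_nonneg b]
    nlinarith [le_abs_self b, mul_le_mul_of_nonneg_left h2 hT0.le,
      mul_nonneg (sub_nonneg.mpr hT1) (by positivity : (0:ℝ) ≤ |b| + 1), h1]
  have hmem : b ∈ Icc (fE β₀) (fE T) := by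
    constructor
    · rw [hfEβ₀]
      calc -(36/5)*(c^2*Real.sqrt c) = -(36/5) * ((1:ℝ)/12)^((5:ℝ)/3) * a^((5:ℝ)/3) := by
            rw [← hk]; ring
        _ ≤ b := hb
    · exact hfET
  obtain ⟨β, hβmem, hfβ⟩ := intermediate_value_Icc hTβ₀ hfEc.continuousOn hmem
  have hβpos : 0 < β := lt_of_lt_of_le hβ₀p hβmem.1
  have hβne : β ≠ 0 := ne_of_gt hβpos
  set α := Real.sqrt (3*a*β/2) with hα
  have hαpos : 0 < α := Real.sqrt_pos.mpr (by positivity)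
  have hα2 : α^2 = 3*a*β/2 := Real.sq_sqrt (by positivity)
  obtain ⟨⟨int1, val1⟩, ⟨int2, val2⟩, ⟨int3, val3⟩⟩ := cosh_int hβpos
  have key : ∀ x : ℝ, Real.cosh (β*x) ≠ 0 := fun x => ne_of_gt (Real.cosh_pos _)
  have hs2 : ∀ x : ℝ, (Real.sinh (β*x))^2 = (Real.cosh (β*x))^2 - 1 := fun x => by
    linarith [Real.cosh_sq_sub_sinh_sq (β*x)]
  have hchd : ∀ x : ℝ, HasDerivAt (fun x : ℝ => Real.cosh (β*x)) (Real.sinh (β*x) * β) x :=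
    fun x => (Real.hasDerivAt_cosh (β*x)).comp x (by simpa using (hasDerivAt_id x).const_mul β)
  have hshd : ∀ x : ℝ, HasDerivAt (fun x : ℝ => Real.sinh (β*x)) (Real.cosh (β*x) * β) x :=
    fun x => (Real.hasDerivAt_sinh (β*x)).comp x (by simpa using (hasDerivAt_id x).const_mul β)
  have hchc : Continuous (fun x : ℝ => Real.cosh (β*x)) := by fun_prop
  have hshc : Continuous (fun x : ℝ => Real.sinh (β*x)) := by fun_prop
  refine ⟨fun x => α * ((Real.cosh (β*x))^2)⁻¹,
      fun x => -2*α*β*(Real.sinh (β*x) * ((Real.cosh (β*x))^3)⁻¹),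
      fun x => -2*α*β^2*((Real.cosh (β*x))^2)⁻¹
        + 6*α*β^2*((Real.sinh (β*x))^2 * ((Real.cosh (β*x))^4)⁻¹),
      ?_, ?_, ?_, ?_, ?_, ?_, ?_, ?_⟩
  · intro x
    have h := (((hchd x).pow 2).inv (pow_ne_zero 2 (key x))).const_mul α
    apply h.congr_deriv
    simp only [Pi.pow_apply, Pi.inv_apply, Pi.mul_apply]
    field_simp
    ring
  · intro x
    have h := (((hshd x).mul (((hchd x).pow 3).inv (pow_ne_zero 3 (key x))))).const_mul
      (-2*α*β)
    apply h.congr_deriv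
    simp only [Pi.pow_apply, Pi.inv_apply, Pi.mul_apply]
    field_simp
    ring
  · -- MemLp g
    have gcont : Continuous (fun x : ℝ => α * ((Real.cosh (β*x))^2)⁻¹) :=
      continuous_const.mul ((hchc.pow 2).inv₀ fun x => pow_ne_zero 2 (key x))
    rw [memLp_two_iff_integrable_sq gcont.aestronglyMeasurable]
    have heq : (fun x : ℝ => (α * ((Real.cosh (β*x))^2)⁻¹)^2)
        = fun x => α^2 * ((Real.cosh (β*x))^2)⁻¹^2 := by
      funext x; ring
    rw [heq]
    exact int1.const_mul _
  · -- MemLp g'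
    have g'cont : Continuous (fun x : ℝ =>
        -2*α*β*(Real.sinh (β*x) * ((Real.cosh (β*x))^3)⁻¹)) :=
      continuous_const.mul (hshc.mul ((hchc.pow 3).inv₀ fun x => pow_ne_zero 3 (key x)))
    rw [memLp_two_iff_integrable_sq g'cont.aestronglyMeasurable]
    have heq : (fun x : ℝ => (-2*α*β*(Real.sinh (β*x) * ((Real.cosh (β*x))^3)⁻¹))^2)
        = fun x => (4*α^2*β^2) * ((Real.sinh (β*x))^2 * ((Real.cosh (β*x))^2)⁻¹^3) := by
      funext x
      field_simp
      ring
    rw [heq]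
    exact int2.const_mul _
  · -- MemLp g''
    have g''cont : Continuous (fun x : ℝ => -2*α*β^2*((Real.cosh (β*x))^2)⁻¹
        + 6*α*β^2*((Real.sinh (β*x))^2 * ((Real.cosh (β*x))^4)⁻¹)) :=
      (continuous_const.mul ((hchc.pow 2).inv₀ fun x => pow_ne_zero 2 (key x))).add
        (continuous_const.mul ((hshc.pow 2).mul
          ((hchc.pow 4).inv₀ fun x => pow_ne_zero 4 (key x))))
    rw [memLp_two_iff_integrable_sq g''cont.aestronglyMeasurable]
    apply Integrable.mono' (int1.const_mul (64*α^2*β^4))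
      ((g''cont.pow 2).aestronglyMeasurable)
    filter_upwards with x
    have hcsq1 : 1 ≤ (Real.cosh (β*x))^2 := by nlinarith [Real.one_le_cosh (β*x)]
    have hK1 : ((Real.cosh (β*x))^2)⁻¹ ≤ 1 := by
      rw [inv_le_one_iff₀]
      right; exact hcsq1
    have hK0 : 0 < ((Real.cosh (β*x))^2)⁻¹ := by positivity
    have heq : -2*α*β^2*((Real.cosh (β*x))^2)⁻¹
        + 6*α*β^2*((Real.sinh (β*x))^2 * ((Real.cosh (β*x))^4)⁻¹)
        = α*β^2*(((Real.cosh (β*x))^2)⁻¹*(4 - 6*((Real.cosh (β*x))^2)⁻¹)) := by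
      rw [hs2 x]
      field_simp
      ring
    rw [Real.norm_eq_abs, abs_of_nonneg (sq_nonneg _)]
    simp only [Pi.pow_apply]
    rw [heq]
    have h48 : 0 ≤ (2 - ((Real.cosh (β*x))^2)⁻¹)*(2 + 3*((Real.cosh (β*x))^2)⁻¹) := by
      nlinarith [hK1, hK0.le]
    nlinarith [mul_nonneg (sq_nonneg (α*β^2*((Real.cosh (β*x))^2)⁻¹)) h48]
  · -- g ≠ 0
    intro h
    have := congrFun h 0
    simp only [mul_zero, Real.cosh_zero, one_pow, inv_one, mul_one, Pi.zero_apply] at this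
    exact ne_of_gt hαpos this
  · -- E2
    have heq : (fun x : ℝ => (α * ((Real.cosh (β*x))^2)⁻¹)^2)
        = fun x => α^2 * ((Real.cosh (β*x))^2)⁻¹^2 := by
      funext x; ring
    rw [heq, MeasureTheory.integral_const_mul, val1, hα2]
    field_simp
    ring
  · -- E3
    have heq : (fun x : ℝ => (1/2)*(-2*α*β*(Real.sinh (β*x) * ((Real.cosh (β*x))^3)⁻¹))^2
          - (1/6)*(α * ((Real.cosh (β*x))^2)⁻¹)^3)
        = fun x => (2*α^2*β^2) * ((Real.sinh (β*x))^2 * ((Real.cosh (β*x))^2)⁻¹^3)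
          - (α^3/6) * ((Real.cosh (β*x))^2)⁻¹^3 := by
      funext x
      field_simp
    rw [heq, MeasureTheory.integral_sub (int2.const_mul _) (int3.const_mul _),
      MeasureTheory.integral_const_mul, MeasureTheory.integral_const_mul, val2, val3, ← hfβ]
    show _ = (4/5)*a*β^2 - (4*a/15)*Real.sqrt (3*a*β/2)
    rw [← hα, show α^3 = α^2*α by ring, hα2]
    field_simp
    ring

theorem feasible_constraint_set :
    (∀ g g' g'' : ℝ → ℝ,
      (∀ x, HasDerivAt g (g' x) x) → (∀ x, HasDerivAt g' (g'' x) x) →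
      MemLp g 2 (volume : Measure ℝ) → MemLp g' 2 (volume : Measure ℝ) →
      MemLp g'' 2 (volume : Measure ℝ) → g ≠ 0 →
      0 < (1 / 2) * (∫ x : ℝ, (g x) ^ 2) ∧
        -(36 / 5) * ((1 : ℝ) / 12) ^ ((5 : ℝ) / 3)
            * ((1 / 2) * (∫ x : ℝ, (g x) ^ 2)) ^ ((5 : ℝ) / 3) ≤
          ∫ x : ℝ, ((1 / 2) * (g' x) ^ 2 - (1 / 6) * (g x) ^ 3)) ∧
    (∀ a b : ℝ, 0 < a →
      -(36 / 5) * ((1 : ℝ) / 12) ^ ((5 : ℝ) / 3) * a ^ ((5 : ℝ) / 3) ≤ b →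
      ∃ g g' g'' : ℝ → ℝ,
        (∀ x, HasDerivAt g (g' x) x) ∧ (∀ x, HasDerivAt g' (g'' x) x) ∧
        MemLp g 2 (volume : Measure ℝ) ∧ MemLp g' 2 (volume : Measure ℝ) ∧
        MemLp g'' 2 (volume : Measure ℝ) ∧ g ≠ 0 ∧
        (1 / 2) * (∫ x : ℝ, (g x) ^ 2) = a ∧
        (∫ x : ℝ, ((1 / 2) * (g' x) ^ 2 - (1 / 6) * (g x) ^ 3)) = b) := by
  constructor
  · intro g g' g'' hd hd' h2 h2' _ hne
    exact part1 g g' g'' hd hd' h2 h2' hne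
  · intro a b ha hb
    exact part2 a b ha hb
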